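/- The encoding of a monoid-valued functor is uniform: for a commutative monoid M, the monoid-valued functor M^(−) with label set A = M and encoding ♭_X : M^(X) → B(M × X) given by ♭_X(t)(m,x) = 1 if t(x) = m ≠ 0 and 0 otherwise, satisfies fil_{{x}} ∘ ♭_X = fil_{{1}} ∘ ♭_2 ∘ M^(χ_{{x}}) for every set X and x ∈ X. -/

import Mathlib

open scoped Classical

/-- Filter map `fil_S : B(A × X) → B(A)`, `fil_S(f)(a) = Σ_{x ∈ S} f(a,x)`. -/
noncomputable def fil {A X : Type} (S : Set X) (f : (A × X) →₀ ℕ) : A →₀ ℕ :=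
  f.sum fun p n => if p.2 ∈ S then Finsupp.single p.1 n else 0

/-- Characteristic function `χ_S : X → 2`, where `2 = Bool` with `true = 1`. -/
noncomputable def chi {X : Type} (S : Set X) : X → Bool :=
  fun x => if x ∈ S then true else false

/-- `group = curry ∘ B(swap) : B(A × X) → (B A)^(X)`. -/
noncomputable def bagGroup {A X : Type} (f : (A × X) →₀ ℕ) : X →₀ (A →₀ ℕ) :=
  Finsupp.finsuppProdEquiv (Finsupp.mapDomain Prod.swap f)

/-- `ungroup = B(swap) ∘ uncurry : (B A)^(X) → B(A × X)`. -/
noncomputable def bagUngroup {A X : Type} (g : X →₀ (A →₀ ℕ)) : (A × X) →₀ ℕ :=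
  Finsupp.mapDomain Prod.swap (Finsupp.finsuppProdEquiv.symm g)

/-- Encoding of the monoid-valued functor: `♭_X(t)(m,x) = 1` iff `t(x) = m ≠ 0`. -/
noncomputable def flatM {M X : Type} [AddCommMonoid M] (t : X →₀ M) : (M × X) →₀ ℕ :=
  t.support.sum fun x => Finsupp.single (t x, x) 1

lemma fil_zero {A X : Type} (S : Set X) : fil (A := A) S 0 = 0 := by
  simp [fil]

lemma fil_add {A X : Type} (S : Set X) (f g : (A × X) →₀ ℕ) :
    fil S (f + g) = fil S f + fil S g := by
  unfold fil
  apply Finsupp.sum_add_index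
  · intro p _; split <;> simp
  · intro p _ m n; split <;> simp [Finsupp.single_add]

lemma fil_single {A X : Type} (S : Set X) (a : A) (y : X) (n : ℕ) :
    fil S (Finsupp.single (a, y) n) = if y ∈ S then Finsupp.single a n else 0 := by
  unfold fil
  rw [Finsupp.sum_single_index] <;> split <;> simp

lemma fil_flatM {M X : Type} [AddCommMonoid M] (S : Set X) (t : X →₀ M) :
    fil S (flatM t) = t.support.sum fun x' => if x' ∈ S then Finsupp.single (t x') 1 else 0 := by
  unfold flatM
  classical
  induction t.support using Finset.induction with
  | empty => simp [fil_zero]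
  | insert _ _ h ih => simp [Finset.sum_insert h, fil_add, fil_single, ih]

lemma mapDomain_chi_apply {M X : Type} [AddCommMonoid M] (x : X) (t : X →₀ M) :
    Finsupp.mapDomain (chi {x}) t true = t x := by
  classical
  rw [Finsupp.mapDomain, Finsupp.sum_apply, Finsupp.sum]
  have : ∀ x' ∈ t.support, Finsupp.single (chi {x} x') (t x') true
      = if x' = x then t x' else 0 := by
    intro x' _
    simp only [chi, Set.mem_singleton_iff, Finsupp.single_apply]
    by_cases h : x' = x <;> simp [h]
  rw [Finset.sum_congr rfl this, Finset.sum_ite_eq' t.support x (fun x' => t x')]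
  by_cases h : x ∈ t.support <;> simp_all [Finsupp.notMem_support_iff]

/-- the encoding of a monoid-valued functor is uniform. -/
theorem monoidValued_encoding_uniform {M X : Type} [AddCommMonoid M]
    (x : X) (t : X →₀ M) :
    fil {x} (flatM t) = fil {true} (flatM (Finsupp.mapDomain (chi {x}) t)) := by
  classical
  rw [fil_flatM, fil_flatM]
  simp only [Set.mem_singleton_iff]
  rw [Finset.sum_ite_eq', Finset.sum_ite_eq', mapDomain_chi_apply]
  have hmem : true ∈ (Finsupp.mapDomain (chi {x}) t).support ↔ x ∈ t.support := by
    simp [Finsupp.mem_support_iff, mapDomain_chi_apply]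
  by_cases h : x ∈ t.support <;> simp [h, hmem]
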